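/- Let π : M̄ → M be a smooth submersion presented locally as π(x,z) = x, and let L ⊆ TM̄ be a distribution given locally as the graph w = l(x,z,y) with each l^β linear in y. Let Ḡ and G be spray structures on M̄ and M such that (π, L) is a submersion between them. Then the spray coefficients satisfy Ḡ^j(x,z,y,l(x,z,y)) = G^j(x,y) for all (x,z) and all y ≠ 0, and differentiating in y^i gives N̄^j_i(x,z,y,l(x,z,y)) + (∂l^α/∂y^i)(x,z) · N̄^j_α(x,z,y,l(x,z,y)) = N^j_i(x,y). -/

import Mathlib

open Set

/-- Lemma 3.1: for a submersion `(π, L)` between spray structures, presented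
in standard local coordinates as `π(x,z) = x`, with `L` the graph of `w = l(x,z,y)`
(`l` linear in `y`), sprays `Ḡ = (Ḡ^j, Ḡ^α)` and `G = (G^j)` such that (a) horizontal
geodesics of `Ḡ` exist with arbitrary initial data in `L \ 0`, and (b) every horizontal
geodesic of `Ḡ` projects to a geodesic of `G`, the spray coefficients satisfy
`Ḡ^j(x,z,y,l(x,z,y)) = G^j(x,y)` for `y ≠ 0`, and differentiating in `y` gives
`N̄^j_i + (∂l^α/∂y^i)·N̄^j_α = N^j_i` along `L`. -/
theorem spray_submersion_coefficients
    {n k : ℕ}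
    (Gc : (Fin n → ℝ) → (Fin n → ℝ) → (Fin n → ℝ))
    (Gbx : (Fin n → ℝ) → (Fin k → ℝ) → (Fin n → ℝ) → (Fin k → ℝ) → (Fin n → ℝ))
    (Gbz : (Fin n → ℝ) → (Fin k → ℝ) → (Fin n → ℝ) → (Fin k → ℝ) → (Fin k → ℝ))
    (l : (Fin n → ℝ) → (Fin k → ℝ) → ((Fin n → ℝ) →ₗ[ℝ] (Fin k → ℝ)))
    -- positive 2-homogeneity of the spray coefficients
    (hGhom : ∀ x y (c : ℝ), 0 < c → Gc x (c • y) = c ^ 2 • Gc x y)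
    (hGbhom : ∀ x z y w (c : ℝ), 0 < c →
      Gbx x z (c • y) (c • w) = c ^ 2 • Gbx x z y w ∧
      Gbz x z (c • y) (c • w) = c ^ 2 • Gbz x z y w)
    -- smoothness of the spray coefficients in the fiber variables, away from 0
    (hGsm : ∀ x y, y ≠ 0 → DifferentiableAt ℝ (fun y' => Gc x y') y)
    (hGbsm : ∀ x z y w, y ≠ 0 → DifferentiableAt ℝ
      (fun p : (Fin n → ℝ) × (Fin k → ℝ) => Gbx x z p.1 p.2) (y, w))
    -- (a) Ḡ is tangent to L \ 0: through every point of L \ 0 there is a horizontal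
    -- geodesic of Ḡ
    (hexist : ∀ x₀ z₀ y₀, y₀ ≠ (0 : Fin n → ℝ) → ∃ ε > (0 : ℝ),
      ∃ (xc : ℝ → Fin n → ℝ) (zc : ℝ → Fin k → ℝ),
        xc 0 = x₀ ∧ zc 0 = z₀ ∧ deriv xc 0 = y₀ ∧
        ∀ t ∈ Ioo (-ε) ε,
          deriv xc t ≠ 0 ∧
          deriv zc t = l (xc t) (zc t) (deriv xc t) ∧
          deriv (deriv xc) t = (-2 : ℝ) • Gbx (xc t) (zc t) (deriv xc t) (deriv zc t) ∧
          deriv (deriv zc) t = (-2 : ℝ) • Gbz (xc t) (zc t) (deriv xc t) (deriv zc t))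
    -- (b) horizontal geodesics of Ḡ project to geodesics of G
    (hproj : ∀ (xc : ℝ → Fin n → ℝ) (zc : ℝ → Fin k → ℝ) (ε : ℝ), 0 < ε →
      (∀ t ∈ Ioo (-ε) ε,
          deriv xc t ≠ 0 ∧
          deriv zc t = l (xc t) (zc t) (deriv xc t) ∧
          deriv (deriv xc) t = (-2 : ℝ) • Gbx (xc t) (zc t) (deriv xc t) (deriv zc t) ∧
          deriv (deriv zc) t = (-2 : ℝ) • Gbz (xc t) (zc t) (deriv xc t) (deriv zc t)) →
      ∀ t ∈ Ioo (-ε) ε,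
        deriv (deriv xc) t = (-2 : ℝ) • Gc (xc t) (deriv xc t)) :
    -- conclusions (1) and (2) of Lemma 3.1
    (∀ x z y, y ≠ (0 : Fin n → ℝ) → Gbx x z y (l x z y) = Gc x y) ∧
    (∀ x z y, y ≠ (0 : Fin n → ℝ) → ∀ v : Fin n → ℝ,
      fderiv ℝ (fun y' => Gbx x z y' (l x z y)) y v
        + fderiv ℝ (fun w' => Gbx x z y w') (l x z y) (l x z v)
      = fderiv ℝ (fun y' => Gc x y') y v) := by
  have part1 : ∀ x z y, y ≠ (0 : Fin n → ℝ) → Gbx x z y (l x z y) = Gc x y := by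
    intro x z y hy
    obtain ⟨ε, hε, xc, zc, hx0, hz0, hdx0, hgeo⟩ := hexist x z y hy
    have h0 : (0 : ℝ) ∈ Ioo (-ε) ε := ⟨by linarith, hε⟩
    obtain ⟨-, hl0, hxx0, -⟩ := hgeo 0 h0
    have hp := hproj xc zc ε hε hgeo 0 h0
    rw [hx0, hdx0] at hl0 hxx0 hp
    rw [hz0] at hl0 hxx0
    rw [hl0] at hxx0
    have : (-2 : ℝ) • Gbx x z y (l x z y) = (-2 : ℝ) • Gc x y := hxx0.symm.trans hp
    have h2 := smul_right_injective (Fin n → ℝ) (by norm_num : (-2 : ℝ) ≠ 0) this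
    exact h2
  refine ⟨part1, ?_⟩
  intro x z y hy v
  set w := l x z y with hw
  have hF : DifferentiableAt ℝ
      (fun p : (Fin n → ℝ) × (Fin k → ℝ) => Gbx x z p.1 p.2) (y, w) := hGbsm x z y w hy
  set F := fun p : (Fin n → ℝ) × (Fin k → ℝ) => Gbx x z p.1 p.2 with hFdef
  set D := fderiv ℝ F (y, w) with hD
  have hFd : HasFDerivAt F D (y, w) := hF.hasFDerivAt
  -- partial derivative in y
  have h1 : HasFDerivAt (fun y' => Gbx x z y' w)
      (D.comp ((ContinuousLinearMap.id ℝ (Fin n → ℝ)).prod 0)) y := by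
    have := hFd.comp y (HasFDerivAt.prodMk (hasFDerivAt_id (𝕜 := ℝ) y) (hasFDerivAt_const w y))
    exact this
  -- partial derivative in w
  have h2 : HasFDerivAt (fun w' => Gbx x z y w')
      (D.comp ((0 : (Fin k → ℝ) →L[ℝ] (Fin n → ℝ)).prod (ContinuousLinearMap.id ℝ _))) w := by
    have := hFd.comp w (HasFDerivAt.prodMk (hasFDerivAt_const y w) (hasFDerivAt_id w))
    exact this
  -- the continuous linear map y' ↦ l x z y'
  set L := LinearMap.toContinuousLinearMap (l x z) with hL
  have hLd : HasFDerivAt (fun y' => l x z y') L y := L.hasFDerivAt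
  have h3 : HasFDerivAt (fun y' => Gbx x z y' (l x z y'))
      (D.comp ((ContinuousLinearMap.id ℝ (Fin n → ℝ)).prod L)) y := by
    have := hFd.comp y (HasFDerivAt.prodMk (hasFDerivAt_id y) hLd)
    exact this
  -- the composite agrees with Gc x near y
  have heq : (fun y' => Gbx x z y' (l x z y')) =ᶠ[nhds y] (fun y' => Gc x y') := by
    have hopen : IsOpen {y' : Fin n → ℝ | y' ≠ 0} := isOpen_ne
    filter_upwards [hopen.mem_nhds hy] with y' hy'
    exact part1 x z y' hy'
  have h4 : fderiv ℝ (fun y' => Gbx x z y' (l x z y')) y = fderiv ℝ (fun y' => Gc x y') y :=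
    heq.fderiv_eq
  have h5 : fderiv ℝ (fun y' => Gbx x z y' (l x z y')) y
      = D.comp ((ContinuousLinearMap.id ℝ (Fin n → ℝ)).prod L) := h3.fderiv
  rw [h1.fderiv, h2.fderiv, ← h4, h5]
  simp only [ContinuousLinearMap.comp_apply, ContinuousLinearMap.prod_apply,
    ContinuousLinearMap.id_apply, ContinuousLinearMap.zero_apply]
  rw [← map_add D]
  congr 1
  · simp [Prod.ext_iff, hL]
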